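/- Every element (s,C) of Γ_k(X) has a unique largest layer point below it: there exists a unique layer point (t,D) of Γ_k(X) with (t,D) ≤ (s,C) such that every layer point ℓ of Γ_k(X) with ℓ ≤ (s,C) satisfies ℓ ≤ (t,D); moreover this (t,D) satisfies D = C as subsets of X. -/

import Mathlib

variable {Z : Type*} [MetricSpace Z]

/-- Vertex set `V_{s,k}(X)` of the degree-Rips complex: points of `X` having at
least `k` other points of `X` within distance `s`. -/
def drVertex (X : Set Z) (k : ℕ) (s : ℝ) : Set Z :=
  {x ∈ X | k ≤ {y ∈ X | y ≠ x ∧ dist x y ≤ s}.ncard}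

/-- The generating relation for components: two vertices at distance at most `s`. -/
def drStep (X : Set Z) (k : ℕ) (s : ℝ) (x y : Z) : Prop :=
  x ∈ drVertex X k s ∧ y ∈ drVertex X k s ∧ dist x y ≤ s

/-- `C` is a degree-Rips component (an element of `π₀ L_{s,k}(X)`): the class of
some vertex `x` under the equivalence relation generated by `drStep`. -/
def drComp (X : Set Z) (k : ℕ) (s : ℝ) (C : Set Z) : Prop :=
  ∃ x ∈ drVertex X k s, C = {y | Relation.ReflTransGen (drStep X k s) x y}

/-- `(t, C)` is a layer point of `Γ_k(X)`: it is an element of the hierarchy, and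
every element `(s, D) ≤ (t, C)` with `s < t` has `D` a proper subset of `C`. -/
def IsLayer (X : Set Z) (k : ℕ) (t : ℝ) (C : Set Z) : Prop :=
  0 ≤ t ∧ drComp X k t C ∧
    ∀ s D, 0 ≤ s → drComp X k s D → s < t → D ⊆ C → D ⊂ C

/-- `(t, C)` is a branch point of `Γ_k(X)`. -/
def IsBranch (X : Set Z) (k : ℕ) (t : ℝ) (C : Set Z) : Prop :=
  0 ≤ t ∧ drComp X k t C ∧
    ((∀ s D, 0 ≤ s → drComp X k s D → s < t → ¬D ⊆ C) ∨
      ∃ s₀, s₀ < t ∧ ∀ s, s₀ ≤ s → s < t →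
        ∃ D₁ D₂, drComp X k s D₁ ∧ drComp X k s D₂ ∧ D₁ ≠ D₂ ∧ D₁ ⊆ C ∧ D₂ ⊆ C)

/-- `(t, D)` is the maximal layer point below the element `(u, C)` of `Γ_k(X)`:
it is a layer point, `(t, D) ≤ (u, C)`, and every layer point below `(u, C)`
is below `(t, D)`. -/
def IsMaxLayerBelow (X : Set Z) (k : ℕ) (u : ℝ) (C : Set Z) (t : ℝ) (D : Set Z) : Prop :=
  IsLayer X k t D ∧ t ≤ u ∧ D ⊆ C ∧
    ∀ t' D', IsLayer X k t' D' → t' ≤ u → D' ⊆ C → t' ≤ t ∧ D' ⊆ D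

/-- `t` is a layer parameter of `X`. -/
def IsLayerParam (X : Set Z) (k : ℕ) (t : ℝ) : Prop :=
  ∃ C, IsLayer X k t C

/-- A stability map `θ : Y → X` (encoded as a map `Z → Z` carrying `Y` into `X`). -/
def IsStabilityMap (X Y : Set Z) (k : ℕ) (r : ℝ) (θ : Z → Z) : Prop :=
  (∀ y ∈ Y, θ y ∈ X) ∧
    ∀ s : ℝ, 0 ≤ s →
      (∀ y₁ y₂, y₁ ∈ drVertex Y k s → y₂ ∈ drVertex Y k s → dist y₁ y₂ ≤ s →
          θ y₁ ∈ drVertex X k (s + 2 * r) ∧ θ y₂ ∈ drVertex X k (s + 2 * r) ∧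
          dist (θ y₁) (θ y₂) ≤ s + 2 * r) ∧
      (∀ x ∈ drVertex X k s, ∃ C, drComp X k (s + 2 * r) C ∧ x ∈ C ∧ θ x ∈ C) ∧
      (∀ y ∈ drVertex Y k s, ∃ D, drComp Y k (s + 2 * r) D ∧ y ∈ D ∧ θ y ∈ D)

/-- Vertices of the degree-Rips complex at scale infinity: points with at least
`k` other points. -/
def drVertexInf (W : Set Z) (k : ℕ) : Set Z :=
  {w ∈ W | k ≤ {w' ∈ W | w' ≠ w}.ncard}

/-- Phase change numbers: distances between distinct vertices at scale infinity. -/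
def IsPhaseChange (W : Set Z) (k : ℕ) (t : ℝ) : Prop :=
  ∃ w₁ ∈ drVertexInf W k, ∃ w₂ ∈ drVertexInf W k, w₁ ≠ w₂ ∧ t = dist w₁ w₂

lemma drVertex_mono (X : Set Z) (hX : X.Finite) (k : ℕ) {a b : ℝ} (hab : a ≤ b) :
    drVertex X k a ⊆ drVertex X k b := by
  intro x hx
  obtain ⟨hxX, hk⟩ := hx
  refine ⟨hxX, le_trans hk ?_⟩
  exact Set.ncard_le_ncard (fun y hy => ⟨hy.1, hy.2.1, hy.2.2.trans hab⟩)
    (hX.subset (fun y hy => hy.1))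

lemma drStep_mono (X : Set Z) (hX : X.Finite) (k : ℕ) {a b : ℝ} (hab : a ≤ b)
    {x y : Z} (h : drStep X k a x y) : drStep X k b x y :=
  ⟨drVertex_mono X hX k hab h.1, drVertex_mono X hX k hab h.2.1, h.2.2.trans hab⟩

lemma drStep_symm {X : Set Z} {k : ℕ} {s : ℝ} {x y : Z} (h : drStep X k s x y) :
    drStep X k s y x :=
  ⟨h.2.1, h.1, by rw [dist_comm]; exact h.2.2⟩

lemma drRtg_symm {X : Set Z} {k : ℕ} {s : ℝ} {x y : Z}
    (h : Relation.ReflTransGen (drStep X k s) x y) :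
    Relation.ReflTransGen (drStep X k s) y x :=
  haveI : Std.Symm (drStep X k s) := ⟨fun _ _ h => drStep_symm h⟩
  (Relation.ReflTransGen.stdSymm (r := drStep X k s)).symm _ _ h

lemma drClass_eq_of_rtg {X : Set Z} {k : ℕ} {s : ℝ} {x x' : Z}
    (h : Relation.ReflTransGen (drStep X k s) x x') :
    {y | Relation.ReflTransGen (drStep X k s) x y}
      = {y | Relation.ReflTransGen (drStep X k s) x' y} := by
  ext y
  constructor
  · intro hy; exact (drRtg_symm h).trans hy
  · intro hy; exact h.trans hy

/-- Interpolation: if `C` is a component at scales `u` and `w`, it is a component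
at any scale in between. -/
lemma drComp_interp (X : Set Z) (hX : X.Finite) (k : ℕ) {u t w : ℝ} {C : Set Z}
    (hu : drComp X k u C) (hw : drComp X k w C) (h1 : u ≤ t) (h2 : t ≤ w) :
    drComp X k t C := by
  obtain ⟨x, hxv, hxC⟩ := hu
  obtain ⟨x', hxv', hxC'⟩ := hw
  refine ⟨x, drVertex_mono X hX k h1 hxv, ?_⟩
  have hxmem : x ∈ C := by rw [hxC]; exact Relation.ReflTransGen.refl
  have hrtg : Relation.ReflTransGen (drStep X k w) x' x := by
    rw [hxC'] at hxmem; exact hxmem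
  have hClassW : {y | Relation.ReflTransGen (drStep X k w) x y} = C := by
    rw [hxC']; exact (drClass_eq_of_rtg hrtg).symm
  apply le_antisymm
  · rw [hxC]
    intro y hy
    exact Relation.ReflTransGen.mono (fun a b h => drStep_mono X hX k h1 h) _ _ hy
  · intro y hy
    rw [← hClassW]
    exact Relation.ReflTransGen.mono (fun a b h => drStep_mono X hX k h2 h) _ _ hy

/-- If all pairwise distances compare equally to `a` and `b`, the component
structure at scales `a` and `b` agree. -/
lemma drComp_congr (X : Set Z) (k : ℕ) {a b : ℝ}
    (h : ∀ x ∈ X, ∀ y ∈ X, (dist x y ≤ a ↔ dist x y ≤ b)) {C : Set Z} :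
    drComp X k a C ↔ drComp X k b C := by
  have hV : drVertex X k a = drVertex X k b := by
    ext x
    simp only [drVertex, Set.mem_sep_iff]
    constructor <;> rintro ⟨hxX, hk⟩ <;> refine ⟨hxX, ?_⟩ <;>
      [skip; skip] <;>
      · convert hk using 2
        ext y
        simp only [Set.mem_sep_iff, and_congr_right_iff]
        intro hyX hne
        first
          | exact (h x hxX y hyX).symm
          | exact (h x hxX y hyX)
  have hS : drStep X k a = drStep X k b := by
    funext x y
    apply propext
    constructor
    · rintro ⟨h1, h2, h3⟩
      exact ⟨hV ▸ h1, hV ▸ h2, (h x h1.1 y h2.1).mp h3⟩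
    · rintro ⟨h1, h2, h3⟩
      exact ⟨hV ▸ h1, hV ▸ h2, (h x h1.1 y h2.1).mpr h3⟩
  unfold drComp
  rw [hV, hS]

/-- every element `(s, C)` of `Γ_k(X)` has a unique largest layer
point below it, and that layer point has component equal to `C`. -/
theorem max_layer_point_below_exists_unique (X : Set Z) (hXfin : X.Finite) (k : ℕ)
    (s : ℝ) (C : Set Z) (hs : 0 ≤ s) (hC : drComp X k s C) :
    (∃ t D, IsMaxLayerBelow X k s C t D ∧ D = C) ∧
      ∀ t D t' D', IsMaxLayerBelow X k s C t D → IsMaxLayerBelow X k s C t' D' →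
        t = t' ∧ D = D' := by
  classical
  constructor
  · -- existence
    set T : Set ℝ := insert 0 ((fun p : Z × Z => dist p.1 p.2) '' (X ×ˢ X)) with hT
    have hTfin : T.Finite := ((hXfin.prod hXfin).image _).insert 0
    -- key: every scale `t ≥ 0` has the same component structure as some
    -- threshold `m ∈ T` with `0 ≤ m ≤ t`.
    have key : ∀ t : ℝ, 0 ≤ t → ∃ m, m ∈ T ∧ 0 ≤ m ∧ m ≤ t ∧
        ∀ C' : Set Z, (drComp X k t C' ↔ drComp X k m C') := by
      intro t ht
      have hFfin : {d ∈ T | d ≤ t}.Finite := hTfin.subset (fun d hd => hd.1)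
      have hFne : {d ∈ T | d ≤ t}.Nonempty := ⟨0, Or.inl rfl, ht⟩
      have hm : sSup {d ∈ T | d ≤ t} ∈ {d ∈ T | d ≤ t} := hFne.csSup_mem hFfin
      refine ⟨sSup {d ∈ T | d ≤ t}, hm.1,
        le_csSup hFfin.bddAbove ⟨Or.inl rfl, ht⟩, hm.2, ?_⟩
      intro C'
      apply drComp_congr
      intro x hxX y hyX
      constructor
      · intro hd
        exact le_csSup hFfin.bddAbove ⟨Or.inr ⟨(x, y), ⟨hxX, hyX⟩, rfl⟩, hd⟩
      · intro hd
        exact hd.trans hm.2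
    -- F : thresholds at which C is a component
    set F : Set ℝ := {d | d ∈ T ∧ 0 ≤ d ∧ d ≤ s ∧ drComp X k d C} with hF
    have hFfin : F.Finite := hTfin.subset (fun d hd => hd.1)
    have hFne : F.Nonempty := by
      obtain ⟨m, hmT, hm0, hms, hmiff⟩ := key s hs
      exact ⟨m, hmT, hm0, hms, (hmiff C).mp hC⟩
    set t₀ : ℝ := sInf F with ht₀def
    have ht₀ : t₀ ∈ F := hFne.csInf_mem hFfin
    -- t₀ is a lower bound for all scales at which C is a component
    have hlb : ∀ t : ℝ, 0 ≤ t → t ≤ s → drComp X k t C → t₀ ≤ t := by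
      intro t ht hts htC
      obtain ⟨m, hmT, hm0, hmt, hmiff⟩ := key t ht
      have : m ∈ F := ⟨hmT, hm0, hmt.trans hts, (hmiff C).mp htC⟩
      exact (csInf_le hFfin.bddBelow this).trans hmt
    have hlayer : IsLayer X k t₀ C := by
      refine ⟨ht₀.2.1, ht₀.2.2.2, ?_⟩
      intro u D hu huD hut hsub
      refine hsub.ssubset_of_ne ?_
      rintro rfl
      exact absurd (hlb u hu (hut.le.trans ht₀.2.2.1) huD) (not_le.mpr hut)
    refine ⟨t₀, C, ⟨hlayer, ht₀.2.2.1, le_refl C, ?_⟩, rfl⟩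
    intro t' D' hl' ht's hD'C
    refine ⟨?_, hD'C⟩
    by_contra hlt
    push_neg at hlt
    -- t₀ < t' : C is a component at t', and D' = C, contradicting layer-ness of (t', D')
    have hCt' : drComp X k t' C :=
      drComp_interp X hXfin k ht₀.2.2.2 hC hlt.le ht's
    have hD'eq : D' = C := by
      obtain ⟨x', hx'v, hx'eq⟩ := hl'.2.1
      obtain ⟨x, hxv, hxeq⟩ := hCt'
      have hx'D' : x' ∈ D' := by rw [hx'eq]; exact Relation.ReflTransGen.refl
      have hx'C : x' ∈ C := hD'C hx'D'
      have hrtg : Relation.ReflTransGen (drStep X k t') x x' := by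
        rw [hxeq] at hx'C; exact hx'C
      rw [hx'eq, hxeq, drClass_eq_of_rtg hrtg]
    have := hl'.2.2 t₀ C ht₀.2.1 ht₀.2.2.2 hlt (by rw [hD'eq])
    rw [hD'eq] at this
    exact this.2 (subset_refl C)
  · -- uniqueness
    intro t D t' D' h1 h2
    obtain ⟨h1t, h1D⟩ := h1.2.2.2 t' D' h2.1 h2.2.1 h2.2.2.1
    obtain ⟨h2t, h2D⟩ := h2.2.2.2 t D h1.1 h1.2.1 h1.2.2.1
    exact ⟨le_antisymm h2t h1t, le_antisymm h2D h1D⟩
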